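/- At the interior Nash equilibrium under uniform price p, the total demand is X(p) = Σ_j x_j* = (N−1)/(p·C) where C = Σ_j 1/a_j, so the ESP's profit Π(p) = (p − cT)·X(p) = ((p − cT)/p)·(N−1)/C satisfies dΠ/dp = (cT/p²)·(N−1)/C > 0 and d²Π/dp² = −(2cT/p³)·(N−1)/C < 0 for p > 0. -/

import Mathlib

open Finset in
/-- Under uniform pricing, with C = Σ_j 1/a_j, equilibrium total demand X(p) = (N−1)/(p·C),
the ESP profit Π(p) = ((p−cT)/p)·(N−1)/C has Π'(p) = (cT/p²)·(N−1)/C > 0 and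
Π''(p) = −(2cT/p³)·(N−1)/C < 0 for p > 0. -/
theorem uniform_profit_derivatives (N : ℕ) (hN : 2 ≤ N)
    (a : Fin N → ℝ) (ha : ∀ i, 0 < a i) (c T : ℝ) (hc : 0 < c) (hT : 0 < T)
    (p : ℝ) (hp : 0 < p) :
    HasDerivAt (fun q => ((q - c * T) / q) * (((N : ℝ) - 1) / ∑ j, 1 / a j))
      ((c * T / p ^ 2) * (((N : ℝ) - 1) / ∑ j, 1 / a j)) p ∧
    0 < (c * T / p ^ 2) * (((N : ℝ) - 1) / ∑ j, 1 / a j) ∧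
    HasDerivAt (fun q => (c * T / q ^ 2) * (((N : ℝ) - 1) / ∑ j, 1 / a j))
      (-(2 * c * T / p ^ 3) * (((N : ℝ) - 1) / ∑ j, 1 / a j)) p ∧
    -(2 * c * T / p ^ 3) * (((N : ℝ) - 1) / ∑ j, 1 / a j) < 0 := by
  have hp0 : p ≠ 0 := ne_of_gt hp
  set K : ℝ := ((N : ℝ) - 1) / ∑ j, 1 / a j with hK
  haveI : Nonempty (Fin N) := Fin.pos_iff_nonempty.mp (by omega)
  have hC : 0 < ∑ j, 1 / a j :=
    Finset.sum_pos (fun i _ => one_div_pos.mpr (ha i)) Finset.univ_nonempty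
  have hN1 : (0 : ℝ) < (N : ℝ) - 1 := by
    have : (2 : ℝ) ≤ (N : ℝ) := by exact_mod_cast hN
    linarith
  have hKpos : 0 < K := div_pos hN1 hC
  have hd1 : HasDerivAt (fun q : ℝ => (q - c * T) / q) (c * T / p ^ 2) p := by
    have := ((hasDerivAt_id p).sub_const (c * T)).fun_div (hasDerivAt_id p) hp0
    refine this.congr_deriv ?_
    simp only [id]
    field_simp
    ring
  have hd2 : HasDerivAt (fun q : ℝ => c * T / q ^ 2) (-(2 * c * T / p ^ 3)) p := by
    have hpow : HasDerivAt (fun q : ℝ => q ^ 2) (2 * p) p := by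
      simpa using hasDerivAt_pow 2 p
    have := (hasDerivAt_const p (c * T)).fun_div hpow (by positivity)
    refine this.congr_deriv ?_
    field_simp
    ring
  refine ⟨hd1.mul_const K, ?_, hd2.mul_const K, ?_⟩
  · positivity
  · have h1 : 0 < 2 * c * T / p ^ 3 := by positivity
    nlinarith [mul_pos h1 hKpos]
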